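/- Let k be a positive even integer and n ≥ 4. Let x_1, …, x_n be integers with Σ_{i=1}^{n} x_i = k·(n − 2) and 2·x_i ≥ k for all i. Suppose that neither x_1 nor x_2 is an integer multiple of k/2 (i.e. for i = 1, 2 there is no integer m with 2·x_i = m·k), while for each i ≥ 3 there exists an integer m_i with 2·x_i = m_i·k. Then there exists an index i ≥ 3 with 2·x_i = k. -/
import Mathlib


/-- Let `k` be a positive even integer and `n ≥ 4`. Let
`x : Fin n → ℤ` with `∑ x i = k * (n - 2)` and `2 * x i ≥ k` for all `i`.
Suppose that neither `x 0` nor `x 1` is an integer multiple of `k/2`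
(integrally: there is no integer `m` with `2 * x i = m * k`), while
for each `i ≥ 2` (0-based; i.e. `i ≥ 3` in 1-based indexing) there exists an
integer `m` with `2 * x i = m * k`. Then some `x i` with `i ≥ 2` satisfies
`2 * x i = k`. -/
theorem exists_half_k_entry (k : ℤ) (hkpos : 0 < k) (hkeven : Even k)
    (n : ℕ) (hn : 4 ≤ n) (x : Fin n → ℤ)
    (hsum : ∑ i, x i = k * ((n : ℤ) - 2))
    (hge : ∀ i, k ≤ 2 * x i)
    (h1 : ¬ ∃ m : ℤ, 2 * x ⟨0, by omega⟩ = m * k)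
    (h2 : ¬ ∃ m : ℤ, 2 * x ⟨1, by omega⟩ = m * k)
    (hrest : ∀ i : Fin n, 2 ≤ (i : ℕ) → ∃ m : ℤ, 2 * x i = m * k) :
    ∃ i : Fin n, 2 ≤ (i : ℕ) ∧ 2 * x i = k := by
  by_contra hcon
  push_neg at hcon
  -- every i with 2 ≤ i has x i ≥ k
  have hbig : ∀ i ∈ Finset.univ.filter (fun i : Fin n => 2 ≤ (i : ℕ)), k ≤ x i := by
    intro i hi
    simp only [Finset.mem_filter, Finset.mem_univ, true_and] at hi
    obtain ⟨m, hm⟩ := hrest i hi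
    have hne : 2 * x i ≠ k := hcon i hi
    have hgei := hge i
    have hm1 : 1 ≤ m := by nlinarith
    have hm2 : m ≠ 1 := by rintro rfl; omega
    have : 2 ≤ m := by omega
    nlinarith
  have hsplit := Finset.sum_filter_add_sum_filter_not Finset.univ
    (fun i : Fin n => 2 ≤ (i : ℕ)) x
  have hpairset : Finset.univ.filter (fun i : Fin n => ¬ 2 ≤ (i : ℕ)) =
      {⟨0, by omega⟩, ⟨1, by omega⟩} := by
    ext i
    simp [Fin.ext_iff]
    omega
  have hpair : ∑ i ∈ Finset.univ.filter (fun i : Fin n => ¬ 2 ≤ (i : ℕ)), x i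
      = x ⟨0, by omega⟩ + x ⟨1, by omega⟩ := by
    rw [hpairset]
    rw [Finset.sum_insert (by simp [Fin.ext_iff]), Finset.sum_singleton]
  have hcard : (Finset.univ.filter (fun i : Fin n => 2 ≤ (i : ℕ))).card = n - 2 := by
    have h1 : (Finset.univ.filter (fun i : Fin n => 2 ≤ (i : ℕ))).card
        + (Finset.univ.filter (fun i : Fin n => ¬ 2 ≤ (i : ℕ))).card = n := by
      rw [Finset.card_filter_add_card_filter_not]
      simp
    rw [hpairset] at h1
    have : ({⟨0, by omega⟩, ⟨1, by omega⟩} : Finset (Fin n)).card = 2 := by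
      rw [Finset.card_insert_of_notMem (by simp [Fin.ext_iff]), Finset.card_singleton]
    omega
  have hlb : ((n : ℤ) - 2) * k ≤ ∑ i ∈ Finset.univ.filter (fun i : Fin n => 2 ≤ (i : ℕ)), x i := by
    calc ((n : ℤ) - 2) * k = (Finset.univ.filter (fun i : Fin n => 2 ≤ (i : ℕ))).card • k := by
          rw [hcard, nsmul_eq_mul, Nat.cast_sub (by omega : 2 ≤ n)]; push_cast; ring
      _ = ∑ _i ∈ Finset.univ.filter (fun i : Fin n => 2 ≤ (i : ℕ)), k := by
          rw [Finset.sum_const]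
      _ ≤ _ := Finset.sum_le_sum hbig
  have h0 := hge ⟨0, by omega⟩
  have h1' := hge ⟨1, by omega⟩
  rw [hpair] at hsplit
  rw [← hsplit] at hsum
  nlinarith
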